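/- Let 𝒢 be a sequence of covers G₀ ←φ₀− G₁ ←φ₁− G₂ ←φ₂− ⋯. Then V_𝒢 is a non-empty compact metrizable zero-dimensional space, and the relation E_𝒢 is the graph of a continuous surjective map from V_𝒢 onto itself (i.e., for every x ∈ V_𝒢 there is exactly one y ∈ V_𝒢 with (x,y) ∈ E_𝒢, the resulting map x ↦ y is continuous, and it maps V_𝒢 onto V_𝒢). -/

import Mathlib

open Filter Topology
open scoped ENNReal

/-- `φ` is a graph homomorphism from `(V₁,E₁)` to `(V₂,E₂)`. -/
def IsGraphHom {V₁ V₂ : Type*} (E₁ : V₁ → V₁ → Prop) (E₂ : V₂ → V₂ → Prop)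
    (φ : V₁ → V₂) : Prop :=
  ∀ u v, E₁ u v → E₂ (φ u) (φ v)

/-- `φ` is edge surjective. -/
def IsEdgeSurj {V₁ V₂ : Type*} (E₁ : V₁ → V₁ → Prop) (E₂ : V₂ → V₂ → Prop)
    (φ : V₁ → V₂) : Prop :=
  ∀ u v, E₂ u v → ∃ u' v', E₁ u' v' ∧ φ u' = u ∧ φ v' = v

/-- `φ` is +directional. -/
def IsPlusDirectional {V₁ V₂ : Type*} (E₁ : V₁ → V₁ → Prop) (φ : V₁ → V₂) : Prop :=
  ∀ u v v', E₁ u v → E₁ u v' → φ v = φ v'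

/-- `φ` is bidirectional. -/
def IsBidirectional {V₁ V₂ : Type*} (E₁ : V₁ → V₁ → Prop) (φ : V₁ → V₂) : Prop :=
  IsPlusDirectional E₁ φ ∧ ∀ u u' v, E₁ u v → E₁ u' v → φ u = φ u'

/-- `φ` is a cover: a +directional edge-surjective graph homomorphism. -/
def IsCover {V₁ V₂ : Type*} (E₁ : V₁ → V₁ → Prop) (E₂ : V₂ → V₂ → Prop)
    (φ : V₁ → V₂) : Prop :=
  IsGraphHom E₁ E₂ φ ∧ IsPlusDirectional E₁ φ ∧ IsEdgeSurj E₁ E₂ φ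

/-- every vertex has an incoming and an outgoing edge. -/
def IsSurjDigraph {V : Type*} (E : V → V → Prop) : Prop :=
  (∀ v, ∃ u, E u v) ∧ ∀ u, ∃ v, E u v

/-- the inverse limit `V_𝒢` of a sequence of graph maps. -/
abbrev InvLim (V : ℕ → Type*) (φ : ∀ n, V (n + 1) → V n) : Type _ :=
  { x : ∀ n, V n // ∀ n, φ n (x (n + 1)) = x n }

/-- the relation `E_𝒢` on `V_𝒢`. -/
def ERel {V : ℕ → Type*} (E : ∀ n, V n → V n → Prop) (φ : ∀ n, V (n + 1) → V n)
    (x y : InvLim V φ) : Prop :=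
  ∀ n, E n (x.1 n) (y.1 n)

/-- the product-of-discrete topology on the inverse limit, given explicitly. -/
def invLimTop (V : ℕ → Type*) (φ : ∀ n, V (n + 1) → V n) :
    TopologicalSpace (InvLim V φ) :=
  @instTopologicalSpaceSubtype _ _ (@Pi.topologicalSpace ℕ V fun _ => ⊥)

/-- the distance function of an explicitly given metric space structure. -/
noncomputable def mdist {X : Type*} (m : MetricSpace X) (x y : X) : ℝ :=
  @dist X m.toDist x y

/-- the topology induced by an explicitly given metric space structure. -/
def mtop {X : Type*} (m : MetricSpace X) : TopologicalSpace X :=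
  @UniformSpace.toTopologicalSpace X m.toUniformSpace

/-- the (half-open) list of vertices `vtx i 0, vtx i 1, …, vtx i (len-1)` of
the circuit `c_{n,i}`, the final vertex (equal to the initial one) omitted. -/
def circList {Vn : Type*} (vtx : ℕ → ℕ → Vn) (i len : ℕ) : List Vn :=
  List.ofFn fun j : Fin len => vtx i (j : ℕ)

open CategoryTheory in
lemma invLim_nonempty' (V : ℕ → Type) [∀ n, Finite (V n)] [∀ n, Nonempty (V n)]
    (φ : ∀ n, V (n + 1) → V n) : Nonempty (InvLim V φ) := by
  let F : ℕᵒᵖ ⥤ Type := Functor.ofOpSequence (X := V) (fun n => TypeCat.ofHom (φ n))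
  haveI : ∀ j : ℕᵒᵖ, Finite (F.obj j) := fun j => by
    show Finite (V j.unop); infer_instance
  haveI : ∀ j : ℕᵒᵖ, Nonempty (F.obj j) := fun j => by
    show Nonempty (V j.unop); infer_instance
  obtain ⟨u, hu⟩ := nonempty_sections_of_finite_inverse_system F
  refine ⟨⟨fun n => u ⟨n⟩, fun n => ?_⟩⟩
  have := hu (j := ⟨n + 1⟩) (j' := ⟨n⟩) (CategoryTheory.homOfLE (Nat.le_add_right n 1)).op
  simp [F] at this
  exact this

theorem stmt0
    (V : ℕ → Type) [∀ n, TopologicalSpace (V n)] [∀ n, DiscreteTopology (V n)]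
    [∀ n, Fintype (V n)] [∀ n, Nonempty (V n)]
    (E : ∀ n, V n → V n → Prop) (φ : ∀ n, V (n + 1) → V n)
    (hgraph : ∀ n, IsSurjDigraph (E n))
    (hcov : ∀ n, IsCover (E (n + 1)) (E n) (φ n)) :
    Nonempty (InvLim V φ) ∧ CompactSpace (InvLim V φ) ∧
      TopologicalSpace.MetrizableSpace (InvLim V φ) ∧
      TopologicalSpace.IsTopologicalBasis {s : Set (InvLim V φ) | IsClopen s} ∧
      ∃ g : InvLim V φ → InvLim V φ,
        (∀ x y, ERel E φ x y ↔ g x = y) ∧ Continuous g ∧ Function.Surjective g := by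
  classical
  haveI : ∀ n, Finite (V n) := fun n => inferInstance
  -- compactness
  haveI : ∀ n, Countable (V n) := fun n => inferInstance
  have hclosed : IsClosed {x : ∀ n, V n | ∀ n, φ n (x (n + 1)) = x n} := by
    have heq : {x : ∀ n, V n | ∀ n, φ n (x (n + 1)) = x n}
        = ⋂ n, {x : ∀ n, V n | φ n (x (n + 1)) = x n} := by
      ext x; simp [Set.mem_iInter]
    rw [heq]
    exact isClosed_iInter fun n => isClosed_eq
      ((continuous_of_discreteTopology (f := φ n)).comp (continuous_apply (n + 1)))
      (continuous_apply n)
  haveI hcs : CompactSpace (InvLim V φ) := isCompact_iff_compactSpace.mp hclosed.isCompact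
  -- the successor picker
  have hsE : ∀ (x : InvLim V φ) n, E n (x.1 n) (Classical.choose ((hgraph n).2 (x.1 n))) :=
    fun x n => Classical.choose_spec ((hgraph n).2 (x.1 n))
  set s : InvLim V φ → ∀ n, V n := fun x n => Classical.choose ((hgraph n).2 (x.1 n)) with hs
  have gcompat : ∀ x : InvLim V φ, ∀ n, φ n (φ (n + 1) (s x (n + 2))) = φ n (s x (n + 1)) := by
    intro x n
    have h1 : E (n + 1) (x.1 (n + 1)) (φ (n + 1) (s x (n + 2))) := by
      have := (hcov (n + 1)).1 _ _ (hsE x (n + 2))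
      rwa [x.2 (n + 1)] at this
    exact (hcov n).2.1 _ _ _ h1 (hsE x (n + 1))
  set g : InvLim V φ → InvLim V φ := fun x => ⟨fun n => φ n (s x (n + 1)), fun n => gcompat x n⟩
    with hg
  have hgE : ∀ x, ERel E φ x (g x) := by
    intro x n
    have := (hcov n).1 _ _ (hsE x (n + 1))
    rwa [x.2 n] at this
  have hiff : ∀ x y, ERel E φ x y ↔ g x = y := by
    intro x y
    constructor
    · intro h
      refine Subtype.ext (funext fun n => ?_)
      have h1 : E (n + 1) (x.1 (n + 1)) (y.1 (n + 1)) := h (n + 1)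
      have h2 : E (n + 1) (x.1 (n + 1)) (s x (n + 1)) := hsE x (n + 1)
      have := (hcov n).2.1 _ _ _ h2 h1
      simpa [g, y.2 n] using this
    · rintro rfl; exact hgE x
  haveI hms : TopologicalSpace.MetrizableSpace (InvLim V φ) :=
    Topology.IsEmbedding.subtypeVal.metrizableSpace
  refine ⟨invLim_nonempty' V φ, hcs, hms, isTopologicalBasis_isClopen,
    g, hiff, ?_, ?_⟩
  · -- continuity
    refine Continuous.subtype_mk (continuous_pi fun n => ?_) _
    exact (continuous_of_discreteTopology
      (f := fun v : V (n + 1) => φ n (Classical.choose ((hgraph (n + 1)).2 v)))).comp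
      ((continuous_apply (n + 1)).comp continuous_subtype_val)
  · -- surjectivity
    intro y
    let V' : ℕ → Type := fun n => {v : V n // E n v (y.1 n)}
    haveI : ∀ n, Finite (V' n) := fun n => Subtype.finite
    haveI : ∀ n, Nonempty (V' n) := fun n =>
      ⟨⟨Classical.choose ((hgraph n).1 (y.1 n)), Classical.choose_spec ((hgraph n).1 (y.1 n))⟩⟩
    let φ' : ∀ n, V' (n + 1) → V' n := fun n v =>
      ⟨φ n v.1, by have := (hcov n).1 _ _ v.2; rwa [y.2 n] at this⟩
    obtain ⟨z⟩ := invLim_nonempty' V' φ'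
    refine ⟨⟨fun n => (z.1 n).1, fun n => congrArg Subtype.val (z.2 n)⟩, ?_⟩
    exact (hiff _ y).mp fun n => (z.1 n).2
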